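/- Let g be a Lorentzian 3×3 real symmetric matrix, g8 a positive-definite 8×8 real symmetric matrix, c ∈ ℝ, A ≠ 0, and let θ ∈ ℝ satisfy A·sinh θ > 0; set u := sinh θ/(A·√|g|) (which is positive). Then U_B(A)ᵀ · M_C(g, g8, c) · U_B(A) = M_check( u^(4/3)·g, u^(−2/3)·g8, −sinh(2θ)/(2·A²·√|g|), A²·√|g|·(coth θ − c/√|g|) ). In particular the dual fields of the timelike Buscher duality form a one-parameter family, indexed by the local SO(1,1) angle θ, all describing the same generalised metric. -/

import Mathlib

open Matrix

/-- The (g,C)-frame generalised metric: a 14×14 matrix in 3+3+8 block form. -/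
noncomputable def MC (g : Matrix (Fin 3) (Fin 3) ℝ) (g8 : Matrix (Fin 8) (Fin 8) ℝ) (c : ℝ) :
    Matrix ((Fin 3 ⊕ Fin 3) ⊕ Fin 8) ((Fin 3 ⊕ Fin 3) ⊕ Fin 8) ℝ :=
  |g.det * g8.det| ^ (-(1 : ℝ) / 2) •
    fromBlocks
      (fromBlocks ((1 + c ^ 2 / g.det) • g) ((c / g.det) • g) ((c / g.det) • g)
        ((1 / g.det) • g))
      0 0 g8

/-- The checked-frame generalised metric, with both a 3-form c and a trivector ω. -/
noncomputable def Mcheck (g : Matrix (Fin 3) (Fin 3) ℝ) (g8 : Matrix (Fin 8) (Fin 8) ℝ)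
    (c ω : ℝ) : Matrix ((Fin 3 ⊕ Fin 3) ⊕ Fin 8) ((Fin 3 ⊕ Fin 3) ⊕ Fin 8) ℝ :=
  |g.det * g8.det| ^ (-(1 : ℝ) / 2) •
    fromBlocks
      (fromBlocks ((1 + c ^ 2 / g.det) • g)
        ((ω + c * (1 + c * ω) / g.det) • g)
        ((ω + c * (1 + c * ω) / g.det) • g)
        ((ω ^ 2 + (1 + c * ω) ^ 2 / g.det) • g))
      0 0 g8

/-- The Buscher duality matrix: [[0, A·1], [−(1/A)·1, 0]] on the first 6 coordinates,
identity on the 8 transverse coordinates. -/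
noncomputable def UB (A : ℝ) : Matrix ((Fin 3 ⊕ Fin 3) ⊕ Fin 8) ((Fin 3 ⊕ Fin 3) ⊕ Fin 8) ℝ :=
  fromBlocks (fromBlocks 0 (A • 1) ((-(1 / A)) • 1) 0) 0 0 1

/-- A 3×3 real symmetric (Hermitian) matrix is Lorentzian if it has exactly one negative
and two positive eigenvalues. -/
def Lorentzian3 (g : Matrix (Fin 3) (Fin 3) ℝ) : Prop :=
  ∃ hg : g.IsHermitian,
    {i | hg.eigenvalues i < 0}.ncard = 1 ∧ {i | 0 < hg.eigenvalues i}.ncard = 2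

lemma lorentzian3_det_neg {g : Matrix (Fin 3) (Fin 3) ℝ} (hg : Lorentzian3 g) : g.det < 0 := by
  obtain ⟨hH, h1, h2⟩ := hg
  obtain ⟨i₀, hi₀⟩ := Set.ncard_eq_one.mp h1
  have hsub : {i | 0 < hH.eigenvalues i} ⊆ (Set.univ \ {i₀}) := by
    intro j hj
    refine ⟨trivial, ?_⟩
    intro hji
    have : j ∈ {i | hH.eigenvalues i < 0} := by rw [hi₀]; exact hji
    simp only [Set.mem_setOf_eq] at this hj
    linarith
  have hcard : (Set.univ \ {i₀} : Set (Fin 3)).ncard = 2 := by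
    rw [Set.ncard_diff (by simp)]
    simp [Set.ncard_univ]
  have heq : {i | 0 < hH.eigenvalues i} = Set.univ \ {i₀} :=
    Set.eq_of_subset_of_ncard_le hsub (by rw [hcard, h2]) (Set.toFinite _)
  have hpos : ∀ j, j ≠ i₀ → 0 < hH.eigenvalues j := by
    intro j hj
    have : j ∈ Set.univ \ ({i₀} : Set (Fin 3)) := ⟨trivial, hj⟩
    rw [← heq] at this; exact this
  have hneg : hH.eigenvalues i₀ < 0 := by
    have : i₀ ∈ {i | hH.eigenvalues i < 0} := by rw [hi₀]; rfl
    exact this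
  have hdet : g.det = ∏ i, hH.eigenvalues i := by
    simpa using hH.det_eq_prod_eigenvalues
  rw [hdet, ← Finset.mul_prod_erase Finset.univ _ (Finset.mem_univ i₀)]
  have : 0 < ∏ j ∈ Finset.univ.erase i₀, hH.eigenvalues j :=
    Finset.prod_pos (fun j hj => hpos j (Finset.ne_of_mem_erase hj))
  exact mul_neg_of_neg_of_pos hneg this

lemma det_smul3 (x : ℝ) (g : Matrix (Fin 3) (Fin 3) ℝ) : (x • g).det = x ^ 3 * g.det := by
  simpa using Matrix.det_smul g x

lemma det_smul8 (x : ℝ) (g8 : Matrix (Fin 8) (Fin 8) ℝ) : (x • g8).det = x ^ 8 * g8.det := by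
  simpa using Matrix.det_smul g8 x

lemma UB_conj (g : Matrix (Fin 3) (Fin 3) ℝ) (g8 : Matrix (Fin 8) (Fin 8) ℝ)
    (K p q r A : ℝ) (hA : A ≠ 0) :
    (UB A)ᵀ * (K • fromBlocks (fromBlocks (p • g) (q • g) (q • g) (r • g)) 0 0 g8) * UB A =
      K • fromBlocks (fromBlocks ((1/A^2*r) • g) ((-q) • g) ((-q) • g) ((A^2*p) • g)) 0 0 g8 := by
  rw [UB]
  simp only [fromBlocks_transpose, fromBlocks_multiply, Matrix.mul_smul, Matrix.smul_mul,
    smul_smul, Matrix.fromBlocks_smul, transpose_smul, transpose_zero, transpose_one,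
    Matrix.mul_zero, Matrix.zero_mul, Matrix.mul_one, Matrix.one_mul, zero_add, add_zero,
    smul_zero, Matrix.mul_assoc]
  rw [fromBlocks_inj, fromBlocks_inj]
  refine ⟨⟨?_, ?_, ?_, ?_⟩, rfl, rfl, rfl⟩
  · exact congrArg (· • g) (by field_simp)
  · exact congrArg (· • g) (by field_simp)
  · exact congrArg (· • g) (by field_simp)
  · exact congrArg (· • g) (by ring)

/-- Timelike Buscher duality in the checked frame: for Lorentzian g, positive-definite g8,
A ≠ 0 and θ with A·sinh θ > 0, setting u := sinh θ/(A·√|g|), the dual generalised metric is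
M_check(u^(4/3)·g, u^(−2/3)·g8, −sinh(2θ)/(2·A²·√|g|), A²·√|g|·(coth θ − c/√|g|)):
a one-parameter family of dual fields. -/
theorem stmt_17 (g : Matrix (Fin 3) (Fin 3) ℝ) (g8 : Matrix (Fin 8) (Fin 8) ℝ)
    (hg : Lorentzian3 g) (hg8 : g8.PosDef) (c A θ : ℝ)
    (hA : A ≠ 0) (hθ : 0 < A * Real.sinh θ) :
    (UB A)ᵀ * MC g g8 c * UB A =
      Mcheck ((Real.sinh θ / (A * Real.sqrt (-g.det))) ^ ((4 : ℝ) / 3) • g)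
        ((Real.sinh θ / (A * Real.sqrt (-g.det))) ^ (-(2 : ℝ) / 3) • g8)
        (-Real.sinh (2 * θ) / (2 * A ^ 2 * Real.sqrt (-g.det)))
        (A ^ 2 * Real.sqrt (-g.det) *
          (Real.cosh θ / Real.sinh θ - c / Real.sqrt (-g.det))) := by
  have hd : g.det < 0 := lorentzian3_det_neg hg
  set sD := Real.sqrt (-g.det) with hsDdef
  have hsD : 0 < sD := Real.sqrt_pos.mpr (by linarith)
  have hsD2 : sD ^ 2 = -g.det := Real.sq_sqrt (by linarith)
  set s := Real.sinh θ with hsdef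
  set ch := Real.cosh θ with hchdef
  have hs : s ≠ 0 := by
    intro h; rw [h, mul_zero] at hθ; exact lt_irrefl 0 hθ
  have hch : ch ^ 2 = s ^ 2 + 1 := Real.cosh_sq θ
  set u := s / (A * sD) with hudef
  have hu : 0 < u := by
    have : u = (A * s) / (A ^ 2 * sD) := by rw [hudef]; field_simp
    rw [this]; positivity
  set c' := -Real.sinh (2 * θ) / (2 * A ^ 2 * sD) with hc'def
  set ω' := A ^ 2 * sD * (ch / s - c / sD) with hω'def
  have hc' : c' = -(s * ch) / (A ^ 2 * sD) := by
    rw [hc'def, Real.sinh_two_mul]; field_simp; ring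
  have hpow3 : (u ^ ((4:ℝ)/3)) ^ (3:ℕ) = u ^ (4:ℝ) := by
    rw [← Real.rpow_natCast (u ^ ((4:ℝ)/3)) 3, ← Real.rpow_mul hu.le]
    norm_num
  have hpow8 : (u ^ (-(2:ℝ)/3)) ^ (8:ℕ) = u ^ (-(16:ℝ)/3) := by
    rw [← Real.rpow_natCast (u ^ (-(2:ℝ)/3)) 8, ← Real.rpow_mul hu.le]
    norm_num
  have hdet1 : ((u ^ ((4:ℝ)/3)) • g).det = u ^ (4:ℝ) * g.det := by
    rw [det_smul3, hpow3]
  have hdet8 : ((u ^ (-(2:ℝ)/3)) • g8).det = u ^ (-(16:ℝ)/3) * g8.det := by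
    rw [det_smul8, hpow8]
  have hpre : |((u ^ ((4:ℝ)/3)) • g).det * ((u ^ (-(2:ℝ)/3)) • g8).det| ^ (-(1:ℝ)/2)
      = u ^ ((2:ℝ)/3) * |g.det * g8.det| ^ (-(1:ℝ)/2) := by
    rw [hdet1, hdet8]
    have hm : u ^ (4:ℝ) * g.det * (u ^ (-(16:ℝ)/3) * g8.det)
        = u ^ (-(4:ℝ)/3) * (g.det * g8.det) := by
      rw [mul_mul_mul_comm, ← Real.rpow_add hu]; norm_num
    rw [hm, abs_mul, abs_of_pos (Real.rpow_pos_of_pos hu _),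
      Real.mul_rpow (Real.rpow_pos_of_pos hu _).le (abs_nonneg _),
      ← Real.rpow_mul hu.le]
    norm_num
  have hdval : g.det = -sD^2 := by linarith
  have h2m : u ^ ((4:ℝ)/3) * u ^ ((2:ℝ)/3) = u ^ 2 := by
    rw [← Real.rpow_add hu, show (4:ℝ)/3 + 2/3 = ((2:ℕ):ℝ) by norm_num, Real.rpow_natCast]
  have h4 : u ^ (4:ℝ) = u ^ (4:ℕ) := by
    rw [show (4:ℝ) = ((4:ℕ):ℝ) by norm_num, Real.rpow_natCast]
  rw [MC, Mcheck, UB_conj g g8 _ _ _ _ A hA, hpre, hdet1,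
    mul_comm (u ^ ((2:ℝ)/3)) (|g.det * g8.det| ^ (-(1:ℝ)/2))]
  conv_rhs => rw [mul_smul]
  congr 1
  rw [Matrix.fromBlocks_smul, Matrix.fromBlocks_smul]
  simp only [smul_zero, smul_smul]
  rw [fromBlocks_inj, fromBlocks_inj]
  refine ⟨⟨?_, ?_, ?_, ?_⟩, rfl, rfl, ?_⟩
  · refine congrArg (· • g) ?_
    rw [mul_comm (u ^ ((2:ℝ)/3)) _, mul_assoc, h2m, h4, hudef, hc', hdval]
    field_simp
    linear_combination hch
  · refine congrArg (· • g) ?_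
    rw [mul_comm (u ^ ((2:ℝ)/3)) _, mul_assoc, h2m, h4, hudef, hc', hω'def, hdval]
    field_simp
    linear_combination (ch*sD - s*c) * hch
  · refine congrArg (· • g) ?_
    rw [mul_comm (u ^ ((2:ℝ)/3)) _, mul_assoc, h2m, h4, hudef, hc', hω'def, hdval]
    field_simp
    linear_combination (ch*sD - s*c) * hch
  · refine congrArg (· • g) ?_
    rw [mul_comm (u ^ ((2:ℝ)/3)) _, mul_assoc, h2m, h4, hudef, hc', hω'def, hdval]
    field_simp
    linear_combination ((ch*sD - s*c)^2 - sD^2) * hch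
  · rw [← Real.rpow_add hu, show (2:ℝ)/3 + -2/3 = 0 by norm_num, Real.rpow_zero, one_smul]
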